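/- If π is an R-spread measure on subsets of X and A₀, A are independent samples from π, then for every conditioning on A (i.e. pointwise in A) and every ℓ ≥ 1, P(|A₀ ∩ A| = ℓ | A) ≤ (e|A|/(Rℓ))^ℓ. -/

import Mathlib

/-- If π is R-spread and A₀, A are independent samples from π, then
pointwise in A and for every ℓ ≥ 1, P(|A₀ ∩ A| = ℓ | A) ≤ (e|A|/(Rℓ))^ℓ. -/
theorem stmt1 {X : Type*} [Fintype X] [DecidableEq X] (R : ℝ) (hR : 1 < R)
    (π : Finset X → ℝ) (hπ0 : ∀ A, 0 ≤ π A) (hπ1 : ∑ A : Finset X, π A = 1)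
    (hspread : ∀ S : Finset X,
      ∑ A ∈ Finset.univ.filter (fun A : Finset X => S ⊆ A), π A ≤ 1 / R ^ S.card)
    (A : Finset X) (ℓ : ℕ) (hℓ : 1 ≤ ℓ) :
    ∑ A₀ ∈ Finset.univ.filter (fun A₀ : Finset X => (A₀ ∩ A).card = ℓ), π A₀ ≤
      (Real.exp 1 * A.card / (R * ℓ)) ^ ℓ := by
  classical
  have hR0 : (0:ℝ) < R := lt_trans one_pos hR
  have hℓ0 : (0:ℝ) < (ℓ:ℝ) := by exact_mod_cast hℓ
  set n := A.card
  -- Step 1: fiberwise decomposition and union bound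
  have h1 : ∑ A₀ ∈ Finset.univ.filter (fun A₀ : Finset X => (A₀ ∩ A).card = ℓ), π A₀
      = ∑ S ∈ A.powersetCard ℓ,
          ∑ A₀ ∈ (Finset.univ.filter (fun A₀ : Finset X => (A₀ ∩ A).card = ℓ)).filter
            (fun A₀ => A₀ ∩ A = S), π A₀ := by
    refine (Finset.sum_fiberwise_of_maps_to ?_ _).symm
    intro A₀ hA₀
    simp only [Finset.mem_filter, Finset.mem_univ, true_and] at hA₀
    exact Finset.mem_powersetCard.2 ⟨Finset.inter_subset_right, hA₀⟩
  have h2 : ∀ S ∈ A.powersetCard ℓ,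
      ∑ A₀ ∈ (Finset.univ.filter (fun A₀ : Finset X => (A₀ ∩ A).card = ℓ)).filter
        (fun A₀ => A₀ ∩ A = S), π A₀ ≤ 1 / R ^ ℓ := by
    intro S hS
    have hcard : S.card = ℓ := (Finset.mem_powersetCard.1 hS).2
    calc ∑ A₀ ∈ (Finset.univ.filter (fun A₀ : Finset X => (A₀ ∩ A).card = ℓ)).filter
            (fun A₀ => A₀ ∩ A = S), π A₀
        ≤ ∑ A₀ ∈ Finset.univ.filter (fun A₀ : Finset X => S ⊆ A₀), π A₀ := by
          refine Finset.sum_le_sum_of_subset_of_nonneg ?_ (fun i _ _ => hπ0 i)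
          intro A₀ hA₀
          simp only [Finset.mem_filter, Finset.mem_univ, true_and] at hA₀ ⊢
          rw [← hA₀.2]
          exact Finset.inter_subset_left
      _ ≤ 1 / R ^ S.card := hspread S
      _ = 1 / R ^ ℓ := by rw [hcard]
  have h3 : ∑ A₀ ∈ Finset.univ.filter (fun A₀ : Finset X => (A₀ ∩ A).card = ℓ), π A₀
      ≤ (n.choose ℓ : ℝ) * (1 / R ^ ℓ) := by
    rw [h1]
    calc _ ≤ ∑ _S ∈ A.powersetCard ℓ, (1 / R ^ ℓ) := Finset.sum_le_sum h2
      _ = (n.choose ℓ : ℝ) * (1 / R ^ ℓ) := by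
          rw [Finset.sum_const, Finset.card_powersetCard, nsmul_eq_mul]
  refine h3.trans ?_
  -- Step 2: binomial bound  choose n ℓ ≤ (e n / ℓ)^ℓ
  have hfac : ((ℓ:ℝ) ^ ℓ) / (ℓ.factorial : ℝ) ≤ Real.exp 1 ^ ℓ := by
    rw [← Real.exp_nat_mul, mul_one]
    have h := Real.sum_le_exp_of_nonneg hℓ0.le (ℓ + 1)
    have hterm : ((ℓ:ℝ) ^ ℓ) / (ℓ.factorial : ℝ)
        ≤ ∑ i ∈ Finset.range (ℓ + 1), (ℓ:ℝ) ^ i / i.factorial := by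
      refine Finset.single_le_sum (f := fun i => (ℓ:ℝ) ^ i / i.factorial) ?_ ?_
      · intro i _
        positivity
      · exact Finset.self_mem_range_succ ℓ
    exact hterm.trans h
  have hchoose : (n.choose ℓ : ℝ) ≤ (Real.exp 1 * n / ℓ) ^ ℓ := by
    have h4 : (n.choose ℓ : ℝ) ≤ (n:ℝ) ^ ℓ / (ℓ.factorial : ℝ) := Nat.choose_le_pow_div ℓ n
    have h5 : (n:ℝ) ^ ℓ / (ℓ.factorial : ℝ)
        = ((n:ℝ) ^ ℓ / (ℓ:ℝ) ^ ℓ) * (((ℓ:ℝ) ^ ℓ) / (ℓ.factorial : ℝ)) := by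
      field_simp
    have h6 : ((n:ℝ) ^ ℓ / (ℓ:ℝ) ^ ℓ) * (((ℓ:ℝ) ^ ℓ) / (ℓ.factorial : ℝ))
        ≤ ((n:ℝ) ^ ℓ / (ℓ:ℝ) ^ ℓ) * Real.exp 1 ^ ℓ := by
      refine mul_le_mul_of_nonneg_left hfac (by positivity)
    refine h4.trans (h5 ▸ h6.trans_eq ?_)
    rw [div_pow, mul_pow]
    ring
  have hRpow : (0:ℝ) < R ^ ℓ := by positivity
  calc (n.choose ℓ : ℝ) * (1 / R ^ ℓ) ≤ (Real.exp 1 * n / ℓ) ^ ℓ * (1 / R ^ ℓ) := by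
        refine mul_le_mul_of_nonneg_right hchoose (by positivity)
    _ = (Real.exp 1 * n / (R * ℓ)) ^ ℓ := by
        rw [div_pow, div_pow, mul_pow R (ℓ:ℝ)]
        field_simp
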